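/- Assume Condition (C) holds with witness X_S for the equation X + A^H f(X)^{-1} A = Q, and consider the alternating sequences (A_h^(k), B_h^(k), Q_h^(k)) and (A^(k), B^(k), Q^(k)). Then all these sequences are well defined and for every k ≥ 1: B_h^(k) ≤ B_h^(k+1) < f(X_S); the interlacing property f(B_h^(k)) ≤ B^(k) ≤ f(B_h^(k+1)) holds; and Q_h^(k+1) ≤ Q^(k) ≤ Q_h^(k) in the Loewner order. -/

import Mathlib

open Matrix Filter Topology
open scoped ComplexOrder

noncomputable section

/-- Square complex matrices of size `n`. -/
abbrev Mat (n : ℕ) := Matrix (Fin n) (Fin n) ℂ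

/-- An operator `f` on complex `n × n` matrices is *admissible* if it satisfies
(a1) `f (f X) = X`, (a2) additivity, (a3) multiplicativity, and
(a4) `f X` is positive semidefinite whenever `X` is. -/
def Admissible {n : ℕ} (f : Mat n → Mat n) : Prop :=
  (∀ X, f (f X) = X) ∧
  (∀ X Y, f (X + Y) = f X + f Y) ∧
  (∀ X Y, f (X * Y) = f X * f Y) ∧
  (∀ X, X.PosSemidef → (f X).PosSemidef)

/-- One step of the alternating iteration producing `(A⁽ᵏ⁾, B⁽ᵏ⁾, Q⁽ᵏ⁾)` from
`(A_h⁽ᵏ⁾, B_h⁽ᵏ⁾, Q_h⁽ᵏ⁾)` (plus-sign equation). -/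
def altStepS {n : ℕ} (f : Mat n → Mat n) (A Q : Mat n) (h : Mat n × Mat n × Mat n) :
    Mat n × Mat n × Mat n :=
  (f A * (f Q - h.2.1)⁻¹ * h.1,
   f A * (f Q - h.2.1)⁻¹ * (f A)ᴴ,
   h.2.2 - h.1ᴴ * (f Q - h.2.1)⁻¹ * h.1)

/-- One step of the alternating iteration producing `(A_h⁽ᵏ⁺¹⁾, B_h⁽ᵏ⁺¹⁾, Q_h⁽ᵏ⁺¹⁾)`
from `(A⁽ᵏ⁾, B⁽ᵏ⁾, Q⁽ᵏ⁾)` (plus-sign equation). -/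
def altStepH {n : ℕ} (A Q : Mat n) (s : Mat n × Mat n × Mat n) : Mat n × Mat n × Mat n :=
  (A * (Q - s.2.1)⁻¹ * s.1,
   A * (Q - s.2.1)⁻¹ * Aᴴ,
   s.2.2 - s.1ᴴ * (Q - s.2.1)⁻¹ * s.1)

/-- The half-index alternating sequence: `altH f A Q k` is the paper's
`(A_{1/2}^{(k+1)}, B_{1/2}^{(k+1)}, Q_{1/2}^{(k+1)})`, starting from `(A, 0, Q)`. -/
def altH {n : ℕ} (f : Mat n → Mat n) (A Q : Mat n) : ℕ → Mat n × Mat n × Mat n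
  | 0 => (A, 0, Q)
  | k + 1 => altStepH A Q (altStepS f A Q (altH f A Q k))

/-- The whole-index alternating sequence: `altS f A Q k` is the paper's
`(A^{(k+1)}, B^{(k+1)}, Q^{(k+1)})` of the alternating iteration. -/
def altS {n : ℕ} (f : Mat n → Mat n) (A Q : Mat n) (k : ℕ) : Mat n × Mat n × Mat n :=
  altStepS f A Q (altH f A Q k)

namespace Stmt18Aux

variable {n : ℕ} {f : Mat n → Mat n}

lemma psd_isUnit_posDef {M : Mat n} (h : M.PosSemidef) (hu : IsUnit M) : M.PosDef := by
  exact h.posDef_iff_isUnit.mpr hu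

lemma fzero (hf : Admissible f) : f 0 = 0 := by
  have h := hf.2.1 0 0
  rw [add_zero] at h
  exact left_eq_add.mp h

lemma fneg (hf : Admissible f) (X : Mat n) : f (-X) = -f X := by
  have h := hf.2.1 X (-X)
  rw [add_neg_cancel, fzero hf] at h
  exact neg_eq_of_add_eq_zero_right h.symm |>.symm

lemma fsub (hf : Admissible f) (X Y : Mat n) : f (X - Y) = f X - f Y := by
  rw [sub_eq_add_neg, hf.2.1, fneg hf, sub_eq_add_neg]

lemma fone (hf : Admissible f) : f 1 = 1 := by
  have hY : ∀ Y, Y * f 1 = Y := fun Y => by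
    conv_lhs => rw [← hf.1 Y, ← hf.2.2.1, mul_one, hf.1]
  have := hY 1
  rwa [one_mul] at this

lemma fisUnit (hf : Admissible f) {X : Mat n} (hX : IsUnit X) : IsUnit (f X) := by
  have h1 : X * X⁻¹ = 1 := Matrix.mul_nonsing_inv _ ((Matrix.isUnit_iff_isUnit_det _).mp hX)
  have h2 : f X * f (X⁻¹) = 1 := by rw [← hf.2.2.1, h1, fone hf]
  have h3 := congrArg Matrix.det h2
  rw [Matrix.det_mul, Matrix.det_one] at h3
  exact (Matrix.isUnit_iff_isUnit_det _).mpr (IsUnit.of_mul_eq_one _ h3)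

lemma finv (hf : Admissible f) {X : Mat n} (hX : IsUnit X) : f (X⁻¹) = (f X)⁻¹ := by
  have h1 : X * X⁻¹ = 1 := Matrix.mul_nonsing_inv _ ((Matrix.isUnit_iff_isUnit_det _).mp hX)
  exact (Matrix.inv_eq_right_inv (by rw [← hf.2.2.1, h1, fone hf])).symm

lemma fpsd_iff (hf : Admissible f) {X : Mat n} : (f X).PosSemidef ↔ X.PosSemidef :=
  ⟨fun h => hf.1 X ▸ hf.2.2.2 _ h, fun h => hf.2.2.2 _ h⟩

lemma fherm (hf : Admissible f) {X : Mat n} (hX : X.IsHermitian) : (f X).IsHermitian := by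
  have hsum : X + X = (X + 1)ᴴ * (X + 1) - Xᴴ * X - 1 := by
    rw [conjTranspose_add, conjTranspose_one, hX.eq]
    noncomm_ring
  have h2 : f X + f X = f ((X + 1)ᴴ * (X + 1)) - f (Xᴴ * X) - f 1 := by
    rw [← hf.2.1, hsum, fsub hf, fsub hf]
  have hh : (f X + f X).IsHermitian := by
    rw [h2, fone hf]
    exact (((hf.2.2.2 _ (posSemidef_conjTranspose_mul_self _)).isHermitian).sub
      ((hf.2.2.2 _ (posSemidef_conjTranspose_mul_self _)).isHermitian)).sub isHermitian_one
  have h3 : (f X)ᴴ + (f X)ᴴ = f X + f X := by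
    have := hh.eq
    rwa [conjTranspose_add] at this
  have h4 : (2 : ℂ) • (f X)ᴴ = (2 : ℂ) • f X := by
    rw [two_smul, two_smul]; exact h3
  exact smul_right_injective (Mat n) (two_ne_zero) h4


lemma fconjT (hf : Admissible f) (X : Mat n) : f (Xᴴ) = (f X)ᴴ := by
  rcases Nat.eq_zero_or_pos n with hn | hn
  · subst hn; apply Subsingleton.elim
  haveI : Nonempty (Fin n) := ⟨⟨0, hn⟩⟩
  -- the image of i•1 is a central square root of -1
  set J : Mat n := f ((Complex.I : ℂ) • 1) with hJ
  have hcentral : ∀ M : Mat n, J * M = M * J := by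
    intro M
    have h : J * f (f M) = f (f M) * J := by
      rw [hJ, ← hf.2.2.1, ← hf.2.2.1]
      congr 1
      rw [smul_mul_assoc, one_mul, mul_smul_comm, mul_one]
    rwa [hf.1 M] at h
  obtain ⟨c, hc⟩ : J ∈ Set.range (Matrix.scalar (Fin n)) := by
    rw [Matrix.mem_range_scalar_iff_commute_single']
    intro i j
    exact (hcentral _).symm
  have hJJ : J * J = -1 := by
    have h1 : ((Complex.I : ℂ) • (1 : Mat n)) * ((Complex.I : ℂ) • 1) = -1 := by
      rw [smul_mul_assoc, one_mul, smul_smul, Complex.I_mul_I, neg_smul, one_smul]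
    rw [hJ, ← hf.2.2.1, h1, fneg hf, fone hf]
  have hcc : c * c = -1 := by
    have h2 : Matrix.scalar (Fin n) (c * c) = Matrix.scalar (Fin n) (-1) := by
      rw [RingHom.map_mul, hc, hJJ, RingHom.map_neg, RingHom.map_one]
    exact (Matrix.scalar_inj.mp h2)
  have hcI : c = Complex.I ∨ c = -Complex.I := by
    have h3 : (c - Complex.I) * (c + Complex.I) = 0 := by
      linear_combination hcc - Complex.I_mul_I
    rcases mul_eq_zero.mp h3 with h | h
    · left; exact sub_eq_zero.mp h
    · right; exact eq_neg_of_add_eq_zero_left h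
  have hJH : Jᴴ = -J := by
    have hcstar : (starRingEnd ℂ) c = -c := by
      rcases hcI with h | h <;> subst h <;> simp
    rw [← hc, Matrix.scalar_apply]
    ext i j
    rcases eq_or_ne i j with rfl | hij
    · simp [Matrix.conjTranspose_apply, Matrix.diagonal_apply_eq, hcstar, Complex.star_def]
    · simp [Matrix.conjTranspose_apply, Matrix.diagonal_apply_ne _ hij,
        Matrix.diagonal_apply_ne _ (Ne.symm hij)]
  -- now the main computation
  set K : Mat n := (-Complex.I : ℂ) • (X - Xᴴ) with hK
  have hIK : ((Complex.I : ℂ) • (1 : Mat n)) * K = X - Xᴴ := by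
    rw [hK, smul_mul_assoc, one_mul, smul_smul]
    rw [mul_neg, Complex.I_mul_I, neg_neg, one_smul]
  have hKher : K.IsHermitian := by
    rw [Matrix.IsHermitian, hK, Matrix.conjTranspose_smul, Matrix.conjTranspose_sub,
      Matrix.conjTranspose_conjTranspose]
    rw [show star (-Complex.I) = Complex.I by simp]
    rw [← neg_sub X Xᴴ, smul_neg, ← neg_smul]
  have hHher : (X + Xᴴ).IsHermitian := by
    rw [Matrix.IsHermitian, Matrix.conjTranspose_add, Matrix.conjTranspose_conjTranspose,
      add_comm]
  have hfH := fherm hf hHher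
  have hfK := fherm hf hKher
  have e1 : f X + f X = f (X + Xᴴ) + J * f K := by
    rw [← hf.2.1, ← hf.2.2.1, hIK, ← hf.2.1]
    congr 1
    abel
  have e2 : f (Xᴴ) + f (Xᴴ) = f (X + Xᴴ) - J * f K := by
    rw [← hf.2.1, ← hf.2.2.1, hIK, ← fsub hf]
    congr 1
    abel
  have e3 : (f X)ᴴ + (f X)ᴴ = f (X + Xᴴ) - J * f K := by
    rw [← Matrix.conjTranspose_add, e1, Matrix.conjTranspose_add, Matrix.conjTranspose_mul,
      hfH.eq, hfK.eq, hJH, mul_neg, ← hcentral (f K)]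
    abel
  have e4 : (2 : ℂ) • (f Xᴴ) = (2 : ℂ) • (f X)ᴴ := by
    rw [two_smul, two_smul, e2, e3]
  exact smul_right_injective (Mat n) (two_ne_zero) e4

lemma fpd (hf : Admissible f) {X : Mat n} (hX : X.PosDef) : (f X).PosDef :=
  psd_isUnit_posDef (hf.2.2.2 _ hX.posSemidef) (fisUnit hf hX.isUnit)

/-- inverse is antitone on positive definite matrices -/
lemma inv_sub_inv_posSemidef {S T : Mat n} (hS : S.PosDef) (hT : T.PosDef)
    (h : (T - S).PosSemidef) : (S⁻¹ - T⁻¹).PosSemidef := by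
  have hTd := (Matrix.isUnit_iff_isUnit_det _).mp hT.isUnit
  have hSd := (Matrix.isUnit_iff_isUnit_det _).mp hS.isUnit
  have hT1 : T * T⁻¹ = 1 := Matrix.mul_nonsing_inv _ hTd
  have hT2 : T⁻¹ * T = 1 := Matrix.nonsing_inv_mul _ hTd
  have hS1 : S * S⁻¹ = 1 := Matrix.mul_nonsing_inv _ hSd
  have hS2 : S⁻¹ * S = 1 := Matrix.nonsing_inv_mul _ hSd
  have hTH : T⁻¹ᴴ = T⁻¹ := hT.inv.isHermitian
  have hDH : ((T - S) * T⁻¹)ᴴ = T⁻¹ * (T - S) := by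
    rw [Matrix.conjTranspose_mul, hTH, (hT.isHermitian.sub hS.isHermitian).eq]
  have key : S⁻¹ - T⁻¹ =
      ((T - S) * T⁻¹)ᴴ * S⁻¹ * ((T - S) * T⁻¹) + T⁻¹ᴴ * (T - S) * T⁻¹ := by
    rw [hDH, hTH]
    have e1 : T⁻¹ * (T - S) = 1 - T⁻¹ * S := by rw [Matrix.mul_sub, hT2]
    have e2 : (T - S) * T⁻¹ = 1 - S * T⁻¹ := by rw [Matrix.sub_mul, hT1]
    rw [e1, e2]
    have e3 : (1 - T⁻¹ * S) * S⁻¹ = S⁻¹ - T⁻¹ := by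
      rw [Matrix.sub_mul, one_mul, Matrix.mul_assoc, hS1, mul_one]
    rw [e3]
    have e4 : S⁻¹ * (S * T⁻¹) = T⁻¹ := by rw [← Matrix.mul_assoc, hS2, one_mul]
    simp only [Matrix.sub_mul, Matrix.mul_sub, mul_one, one_mul, Matrix.mul_assoc, e4]
    abel
  rw [key]
  exact ((hS.inv.posSemidef).conjTranspose_mul_mul_same _).add
    (h.conjTranspose_mul_mul_same _)

/-- quantitative Schur complement lemma -/
lemma schurPD {P R C : Mat n} (hP : P.PosDef) (hS : (R - Cᴴ * P⁻¹ * C).PosDef) :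
    (P - C * R⁻¹ * Cᴴ).PosDef := by
  have hpsd : (Cᴴ * P⁻¹ * C).PosSemidef := (hP.inv.posSemidef).conjTranspose_mul_mul_same C
  have hR : R.PosDef := by
    have h := hS.add_posSemidef hpsd
    rwa [sub_add_cancel] at h
  have hPd := (Matrix.isUnit_iff_isUnit_det _).mp hP.isUnit
  have hRd := (Matrix.isUnit_iff_isUnit_det _).mp hR.isUnit
  have hSd := (Matrix.isUnit_iff_isUnit_det _).mp hS.isUnit
  have hP1 : P * P⁻¹ = 1 := Matrix.mul_nonsing_inv _ hPd
  have hR2 : R⁻¹ * R = 1 := Matrix.nonsing_inv_mul _ hRd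
  have hs1 : (R - Cᴴ * P⁻¹ * C) * (R - Cᴴ * P⁻¹ * C)⁻¹ = 1 := Matrix.mul_nonsing_inv _ hSd
  set S : Mat n := R - Cᴴ * P⁻¹ * C with hSdef
  have hPH : P⁻¹ᴴ = P⁻¹ := hP.inv.isHermitian
  have hT : (P⁻¹ + P⁻¹ * C * S⁻¹ * Cᴴ * P⁻¹).PosDef := by
    have hcong : (P⁻¹ * C * S⁻¹ * Cᴴ * P⁻¹) = (Cᴴ * P⁻¹)ᴴ * S⁻¹ * (Cᴴ * P⁻¹) := by
      rw [Matrix.conjTranspose_mul, hPH, Matrix.conjTranspose_conjTranspose]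
      simp only [Matrix.mul_assoc]
    rw [hcong]
    exact hP.inv.add_posSemidef ((hS.inv.posSemidef).conjTranspose_mul_mul_same _)
  have hCPC : Cᴴ * P⁻¹ * C = R - S := by rw [hSdef]; abel
  have hmul : (P - C * R⁻¹ * Cᴴ) * (P⁻¹ + P⁻¹ * C * S⁻¹ * Cᴴ * P⁻¹) = 1 := by
    have hrs : R⁻¹ * (R - S) * S⁻¹ = S⁻¹ - R⁻¹ := by
      rw [Matrix.mul_sub, hR2, Matrix.sub_mul, one_mul, Matrix.mul_assoc R⁻¹ S S⁻¹,
        Matrix.mul_nonsing_inv _ hSd, mul_one]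
    have expand : (P - C * R⁻¹ * Cᴴ) * (P⁻¹ + P⁻¹ * C * S⁻¹ * Cᴴ * P⁻¹)
        = P * P⁻¹ + P * P⁻¹ * (C * S⁻¹ * Cᴴ * P⁻¹)
          - C * R⁻¹ * Cᴴ * P⁻¹ - C * (R⁻¹ * (Cᴴ * P⁻¹ * C) * S⁻¹) * (Cᴴ * P⁻¹) := by
      simp only [Matrix.mul_add, Matrix.sub_mul, Matrix.mul_assoc]
      abel
    rw [expand, hP1, one_mul, hCPC, hrs]
    simp only [Matrix.sub_mul, Matrix.mul_sub, Matrix.mul_assoc]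
    abel
  have hinv : (P⁻¹ + P⁻¹ * C * S⁻¹ * Cᴴ * P⁻¹)⁻¹ = P - C * R⁻¹ * Cᴴ :=
    Matrix.inv_eq_left_inv hmul
  rw [← hinv]
  exact hT.inv

/-- the auxiliary single alternating sequence -/
def vseq {n : ℕ} (f : Mat n → Mat n) (A Q : Mat n) : ℕ → Mat n
  | 0 => 0
  | j + 1 => f (A * (Q - vseq f A Q j)⁻¹ * Aᴴ)

lemma vseq_zero {A Q : Mat n} : vseq f A Q 0 = 0 := rfl

lemma vseq_succ {A Q : Mat n} (j : ℕ) :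
    vseq f A Q (j + 1) = f (A * (Q - vseq f A Q j)⁻¹ * Aᴴ) := rfl

variable {A Q XS : Mat n}

lemma vseq_good (hf : Admissible f) (hXS : XS.PosDef)
    (hXSle : (Q - Aᴴ * (f XS)⁻¹ * A - XS).PosSemidef) :
    ∀ j, (vseq f A Q j).PosSemidef ∧ (XS - vseq f A Q j).PosDef := by
  have hfXS : (f XS).PosDef := fpd hf hXS
  have hpsd2 : (Aᴴ * (f XS)⁻¹ * A).PosSemidef :=
    (hfXS.inv.posSemidef).conjTranspose_mul_mul_same A
  intro j
  induction j with
  | zero =>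
    refine ⟨by rw [vseq_zero]; exact Matrix.PosSemidef.zero, ?_⟩
    rw [vseq_zero, sub_zero]; exact hXS
  | succ j ih =>
    obtain ⟨hpsdj, hpdj⟩ := ih
    have hQv : (Q - vseq f A Q j).PosDef := by
      have h : ((Q - Aᴴ * (f XS)⁻¹ * A - XS) + Aᴴ * (f XS)⁻¹ * A
          + (XS - vseq f A Q j)).PosDef :=
        Matrix.PosDef.posSemidef_add (hXSle.add hpsd2) hpdj
      rwa [show (Q - Aᴴ * (f XS)⁻¹ * A - XS) + Aᴴ * (f XS)⁻¹ * A
          + (XS - vseq f A Q j) = Q - vseq f A Q j from by abel] at h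
    have hSch : ((Q - vseq f A Q j) - Aᴴ * (f XS)⁻¹ * A).PosDef := by
      have h : ((Q - Aᴴ * (f XS)⁻¹ * A - XS) + (XS - vseq f A Q j)).PosDef :=
        Matrix.PosDef.posSemidef_add hXSle hpdj
      rwa [show (Q - Aᴴ * (f XS)⁻¹ * A - XS) + (XS - vseq f A Q j)
          = (Q - vseq f A Q j) - Aᴴ * (f XS)⁻¹ * A from by abel] at h
    have hMpd : (f XS - A * (Q - vseq f A Q j)⁻¹ * Aᴴ).PosDef := schurPD hfXS hSch
    constructor
    · rw [vseq_succ]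
      exact hf.2.2.2 _ ((hQv.inv.posSemidef).mul_mul_conjTranspose_same A)
    · rw [vseq_succ]
      have h := fpd hf hMpd
      rwa [fsub hf, hf.1] at h

lemma vseq_Qpd (hf : Admissible f) (hXS : XS.PosDef)
    (hXSle : (Q - Aᴴ * (f XS)⁻¹ * A - XS).PosSemidef) (j : ℕ) :
    (Q - vseq f A Q j).PosDef := by
  have hfXS : (f XS).PosDef := fpd hf hXS
  have hpsd2 : (Aᴴ * (f XS)⁻¹ * A).PosSemidef :=
    (hfXS.inv.posSemidef).conjTranspose_mul_mul_same A
  have hpdj := (vseq_good hf hXS hXSle j).2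
  have h : ((Q - Aᴴ * (f XS)⁻¹ * A - XS) + Aᴴ * (f XS)⁻¹ * A
      + (XS - vseq f A Q j)).PosDef :=
    Matrix.PosDef.posSemidef_add (hXSle.add hpsd2) hpdj
  rwa [show (Q - Aᴴ * (f XS)⁻¹ * A - XS) + Aᴴ * (f XS)⁻¹ * A
      + (XS - vseq f A Q j) = Q - vseq f A Q j from by abel] at h

lemma vseq_mono (hf : Admissible f) (hXS : XS.PosDef)
    (hXSle : (Q - Aᴴ * (f XS)⁻¹ * A - XS).PosSemidef) :
    ∀ j, (vseq f A Q (j + 1) - vseq f A Q j).PosSemidef := by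
  have hQv := vseq_Qpd hf hXS hXSle
  intro j
  induction j with
  | zero =>
    rw [vseq_zero, sub_zero]
    exact (vseq_good hf hXS hXSle 1).1
  | succ j ih =>
    have hS : (Q - vseq f A Q (j + 1)).PosDef := hQv (j + 1)
    have hT : (Q - vseq f A Q j).PosDef := hQv j
    have hTS : ((Q - vseq f A Q j) - (Q - vseq f A Q (j + 1))).PosSemidef := by
      rwa [show (Q - vseq f A Q j) - (Q - vseq f A Q (j + 1))
          = vseq f A Q (j + 1) - vseq f A Q j from by abel]
    have hinv := inv_sub_inv_posSemidef hS hT hTS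
    rw [vseq_succ (j + 1)]
    nth_rewrite 2 [vseq_succ j]
    rw [← fsub hf]
    apply hf.2.2.2
    rw [show A * (Q - vseq f A Q (j + 1))⁻¹ * Aᴴ - A * (Q - vseq f A Q j)⁻¹ * Aᴴ
        = A * ((Q - vseq f A Q (j + 1))⁻¹ - (Q - vseq f A Q j)⁻¹) * Aᴴ from by
      rw [Matrix.mul_sub, Matrix.sub_mul]]
    exact hinv.mul_mul_conjTranspose_same A

lemma alt_eq (hf : Admissible f) (hXS : XS.PosDef)
    (hXSle : (Q - Aᴴ * (f XS)⁻¹ * A - XS).PosSemidef) :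
    ∀ k, (altH f A Q k).2.1 = f (vseq f A Q (2 * k)) ∧
      (altS f A Q k).2.1 = vseq f A Q (2 * k + 1) := by
  have hQv := vseq_Qpd hf hXS hXSle
  have hstep1 : ∀ k, (altH f A Q k).2.1 = f (vseq f A Q (2 * k)) →
      (altS f A Q k).2.1 = vseq f A Q (2 * k + 1) := by
    intro k hb
    have hu : IsUnit (Q - vseq f A Q (2 * k)) := (hQv (2 * k)).isUnit
    show f A * (f Q - (altH f A Q k).2.1)⁻¹ * (f A)ᴴ = vseq f A Q (2 * k + 1)
    rw [hb, ← fsub hf, ← finv hf hu, ← fconjT hf, ← hf.2.2.1, ← hf.2.2.1, vseq_succ]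
  have hstep2 : ∀ k, (altS f A Q k).2.1 = vseq f A Q (2 * k + 1) →
      (altH f A Q (k + 1)).2.1 = f (vseq f A Q (2 * (k + 1))) := by
    intro k hB
    show A * (Q - (altS f A Q k).2.1)⁻¹ * Aᴴ = f (vseq f A Q (2 * (k + 1)))
    rw [hB, show 2 * (k + 1) = (2 * k + 1) + 1 from by ring, vseq_succ (2 * k + 1), hf.1]
  intro k
  induction k with
  | zero =>
    have hb0 : (altH f A Q 0).2.1 = f (vseq f A Q (2 * 0)) := by
      show (0 : Mat n) = f (vseq f A Q 0)
      rw [vseq_zero, fzero hf]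
    exact ⟨hb0, hstep1 0 hb0⟩
  | succ k ih =>
    have hb := hstep2 k ih.2
    exact ⟨hb, hstep1 (k + 1) hb⟩

end Stmt18Aux

open Stmt18Aux

/-- monotonicity and interlacing of the alternating sequences under
Condition (C) with witness `X_S` (indices shifted by one with respect to the paper). -/
theorem stmt_18 {n : ℕ} (f : Mat n → Mat n) (hf : Admissible f)
    (A Q : Mat n) (hQ : Q.PosDef)
    (XS : Mat n) (hXS : XS.PosDef)
    (hXSle : (Q - Aᴴ * (f XS)⁻¹ * A - XS).PosSemidef) :
    (∀ k, IsUnit (f Q - (altH f A Q k).2.1) ∧ IsUnit (Q - (altS f A Q k).2.1)) ∧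
    (∀ k, ((altH f A Q (k + 1)).2.1 - (altH f A Q k).2.1).PosSemidef ∧
      (f XS - (altH f A Q (k + 1)).2.1).PosDef ∧
      ((altS f A Q k).2.1 - f ((altH f A Q k).2.1)).PosSemidef ∧
      (f ((altH f A Q (k + 1)).2.1) - (altS f A Q k).2.1).PosSemidef ∧
      ((altH f A Q k).2.2 - (altS f A Q k).2.2).PosSemidef ∧
      ((altS f A Q k).2.2 - (altH f A Q (k + 1)).2.2).PosSemidef) := by
  have hQv := vseq_Qpd hf hXS hXSle
  have hgood := vseq_good hf hXS hXSle
  have hmono := vseq_mono hf hXS hXSle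
  have halt := alt_eq hf hXS hXSle
  constructor
  · intro k
    constructor
    · rw [(halt k).1, ← fsub hf]
      exact (fpd hf (hQv (2 * k))).isUnit
    · rw [(halt k).2]
      exact (hQv (2 * k + 1)).isUnit
  · intro k
    have e1 : (altH f A Q (k + 1)).2.1 = f (vseq f A Q (2 * k + 2)) := by
      have h := (halt (k + 1)).1
      rwa [show 2 * (k + 1) = 2 * k + 2 from by ring] at h
    have e0 : (altH f A Q k).2.1 = f (vseq f A Q (2 * k)) := (halt k).1
    have eS : (altS f A Q k).2.1 = vseq f A Q (2 * k + 1) := (halt k).2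
    have hm1 := hmono (2 * k)
    have hm2 : (vseq f A Q (2 * k + 2) - vseq f A Q (2 * k + 1)).PosSemidef := hmono (2 * k + 1)
    refine ⟨?_, ?_, ?_, ?_, ?_, ?_⟩
    · rw [e1, e0, ← fsub hf]
      apply hf.2.2.2
      have h := hm2.add hm1
      rwa [show (vseq f A Q (2 * k + 2) - vseq f A Q (2 * k + 1))
          + (vseq f A Q (2 * k + 1) - vseq f A Q (2 * k))
          = vseq f A Q (2 * k + 2) - vseq f A Q (2 * k) from by abel] at h
    · rw [e1, ← fsub hf]
      exact fpd hf (hgood (2 * k + 2)).2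
    · rw [eS, e0, hf.1]
      exact hm1
    · rw [e1, eS, hf.1]
      exact hm2
    · show ((altH f A Q k).2.2 - ((altH f A Q k).2.2
        - (altH f A Q k).1ᴴ * (f Q - (altH f A Q k).2.1)⁻¹ * (altH f A Q k).1)).PosSemidef
      rw [sub_sub_cancel]
      have hpd : (f Q - (altH f A Q k).2.1).PosDef := by
        rw [e0, ← fsub hf]
        exact fpd hf (hQv (2 * k))
      exact (hpd.inv.posSemidef).conjTranspose_mul_mul_same _
    · show ((altS f A Q k).2.2 - ((altS f A Q k).2.2
        - (altS f A Q k).1ᴴ * (Q - (altS f A Q k).2.1)⁻¹ * (altS f A Q k).1)).PosSemidef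
      rw [sub_sub_cancel]
      have hpd : (Q - (altS f A Q k).2.1).PosDef := by
        rw [eS]
        exact hQv (2 * k + 1)
      exact (hpd.inv.posSemidef).conjTranspose_mul_mul_same _
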